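/- For q ≥ 5 a prime power and n a positive integer coprime to the characteristic, the quantity M = ((q-1)/q) · Σ_{d|n} μ(d) q^{n/d} - (q^n + 1)/2 is strictly positive. -/

import Mathlib

open ArithmeticFunction

/-- For `q ≥ 5` a power of a prime `p` with `p ∤ n`, the quantity
`((q-1)/q) · Σ_{d|n} μ(d) q^(n/d) - (q^n + 1)/2` is strictly positive. -/
theorem stmt8 {p r q n : ℕ} (hp : p.Prime) (hq : q = p ^ r) (h5 : 5 ≤ q)
    (hn : 1 ≤ n) (hpn : ¬ p ∣ n) :
    0 < ((q : ℚ) - 1) / q * ∑ d ∈ n.divisors, (moebius d : ℚ) * (q : ℚ) ^ (n / d)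
          - ((q : ℚ) ^ n + 1) / 2 := by
  have hq5 : (5:ℚ) ≤ (q:ℚ) := by exact_mod_cast h5
  have hq0 : (0:ℚ) < q := by linarith
  have hn0 : 0 < n := hn
  have h1 : (1:ℕ) ∈ n.divisors := Nat.one_mem_divisors.mpr (by omega)
  rw [← Finset.add_sum_erase _ _ h1]
  set T : ℚ := ∑ d ∈ n.divisors.erase 1, (moebius d : ℚ) * (q : ℚ) ^ (n / d) with hT
  have hμ1 : ((moebius 1 : ℤ) : ℚ) * (q:ℚ) ^ (n / 1) = (q:ℚ)^n := by
    simp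
  rw [hμ1]
  -- bound on T
  have habs : |T| ≤ ∑ k ∈ Finset.range n, (q:ℚ)^k := by
    calc |T| ≤ ∑ d ∈ n.divisors.erase 1, |(moebius d : ℚ) * (q : ℚ) ^ (n / d)| :=
          Finset.abs_sum_le_sum_abs _ _
      _ ≤ ∑ d ∈ n.divisors.erase 1, (q : ℚ) ^ (n / d) := by
          apply Finset.sum_le_sum
          intro d hd
          rw [abs_mul, abs_pow, abs_of_pos hq0]
          have hm : |(moebius d : ℚ)| ≤ 1 := by
            have := abs_moebius_le_one (n := d)
            exact_mod_cast (by exact_mod_cast this : |((moebius d : ℤ) : ℚ)| ≤ 1)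
          nlinarith [pow_pos hq0 (n / d)]
      _ = ∑ k ∈ (n.divisors.erase 1).image (fun d => n / d), (q:ℚ)^k := by
          rw [Finset.sum_image]
          intro a ha b hb hab
          have haD : a ∣ n := (Nat.mem_divisors.mp (Finset.mem_of_mem_erase ha)).1
          have hbD : b ∣ n := (Nat.mem_divisors.mp (Finset.mem_of_mem_erase hb)).1
          have := Nat.div_div_self haD (by omega)
          rw [← Nat.div_div_self haD (by omega : n ≠ 0), (show n / a = n / b from hab),
            Nat.div_div_self hbD (by omega : n ≠ 0)]
      _ ≤ ∑ k ∈ Finset.range n, (q:ℚ)^k := by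
          apply Finset.sum_le_sum_of_subset_of_nonneg
          · intro k hk
            obtain ⟨d, hd, rfl⟩ := Finset.mem_image.mp hk
            have hd1 : d ≠ 1 := Finset.ne_of_mem_erase hd
            have hdD := Nat.mem_divisors.mp (Finset.mem_of_mem_erase hd)
            have hdpos : 0 < d := Nat.pos_of_mem_divisors (Finset.mem_of_mem_erase hd)
            have hd2 : 1 < d := by omega
            exact Finset.mem_range.mpr (Nat.div_lt_self hn0 hd2)
          · intro k _ _
            positivity
  have hgeom : ∑ k ∈ Finset.range n, (q:ℚ)^k = ((q:ℚ)^n - 1) / ((q:ℚ) - 1) := by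
    rw [geom_sum_eq (by linarith : (q:ℚ) ≠ 1)]
  have hTlb : -(((q:ℚ)^n - 1) / ((q:ℚ) - 1)) ≤ T := by
    rw [← hgeom]
    linarith [neg_abs_le T]
  have hqn : (q:ℚ) ≤ (q:ℚ)^n := le_self_pow₀ (by linarith) (by omega)
  have hkey : -((q:ℚ)^n - 1) ≤ ((q:ℚ) - 1) * T := by
    have h := mul_le_mul_of_nonneg_left hTlb (by linarith : (0:ℚ) ≤ (q:ℚ) - 1)
    rw [mul_neg, mul_div_cancel₀ _ (by linarith : (q:ℚ) - 1 ≠ 0)] at h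
    linarith
  rw [div_mul_eq_mul_div, sub_pos, div_lt_div_iff₀ (by norm_num) hq0]
  nlinarith [pow_pos hq0 n]
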